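/- arXiv:2312.05232 — 3 statements merged into one kernel-verified Lean document; each statement's English description precedes it below -/
import Mathlib

section
/- If M is a symmetric positive definite matrix and K is any square matrix of the same size, then the corrected filter K_corr = K - (1·1ᵀ/(1ᵀM1))·M·(K - I) is conservative, i.e., 1ᵀ M K_corr v = 1ᵀ M v for every vector v. -/
open Matrix

/-- The volume-weighted conservative correction of an arbitrary filter matrix `K`
is conservative: `1ᵀ M K_corr v = 1ᵀ M v` for every vector `v`. -/
theorem stmt0 {n : ℕ} (hn : 1 ≤ n) (M K : Matrix (Fin n) (Fin n) ℝ)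
    (hM : M.PosDef)
    (ones : Fin n → ℝ) (hones : ones = fun _ => 1)
    (Kcorr : Matrix (Fin n) (Fin n) ℝ)
    (hKcorr : Kcorr =
      K - ((1 / (ones ⬝ᵥ M *ᵥ ones)) • vecMulVec ones ones) * (M * (K - 1))) :
    ∀ v : Fin n → ℝ, ones ⬝ᵥ M *ᵥ (Kcorr *ᵥ v) = ones ⬝ᵥ M *ᵥ v := by
  intro v
  have hne : ones ≠ 0 := by
    subst hones
    intro h
    have := congrFun h ⟨0, hn⟩
    simpa using this
  have ha : ones ⬝ᵥ M *ᵥ ones ≠ 0 := by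
    have := hM.dotProduct_mulVec_pos hne
    simp only [RCLike.star_def, star_trivial] at this
    exact ne_of_gt (by simpa using this)
  set a := ones ⬝ᵥ M *ᵥ ones with haa
  have hvmv : ∀ w : Fin n → ℝ, (vecMulVec ones ones) *ᵥ w = (ones ⬝ᵥ w) • ones := by
    intro w
    funext i
    simp [mulVec, dotProduct, vecMulVec_apply, Finset.mul_sum, mul_comm, mul_assoc,
      mul_left_comm]
  subst hKcorr
  rw [sub_mulVec, mulVec_sub, dotProduct_sub, ← mulVec_mulVec,
    ← mulVec_mulVec, smul_mulVec, hvmv, mulVec_smul]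
  simp only [dotProduct_smul, smul_eq_mul, ← haa, sub_mulVec, one_mulVec, mulVec_sub,
    dotProduct_sub]
  field_simp
  simp only [mulVec_smul, dotProduct_smul, smul_eq_mul, ← mulVec_mulVec, ← haa]
  ring
end

section
/- For an s-stage Runge–Kutta method applied to u' = f(u,t), the update u^{n+1} = uⁿ + Δt Σ_j b_j f_j in an inner product space satisfies ‖u^{n+1}‖² - ‖uⁿ‖² = 2Δt Σ_j b_j ⟨y_j, f_j⟩ - 2Δt² Σ_{i,j} b_i a_{ij} ⟨f_j, f_i⟩ + Δt² Σ_{i,j} b_i b_j ⟨f_i, f_j⟩, where y_i = uⁿ + Δt Σ_j a_{ij} f_j are the stage values. -/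
open RealInnerProductSpace Finset

/-- Energy change identity for a Runge–Kutta step in an inner product space. -/
theorem stmt8 {V : Type*} [NormedAddCommGroup V] [InnerProductSpace ℝ V]
    {s : ℕ} (hs : 1 ≤ s)
    (un : V) (Δt : ℝ) (a : Fin s → Fin s → ℝ) (b : Fin s → ℝ) (f : Fin s → V)
    (y : Fin s → V) (hy : ∀ i, y i = un + Δt • ∑ j, a i j • f j)
    (unext : V) (hunext : unext = un + Δt • ∑ j, b j • f j) :
    ‖unext‖ ^ 2 - ‖un‖ ^ 2 =
      2 * Δt * ∑ j, b j * ⟪y j, f j⟫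
      - 2 * Δt ^ 2 * ∑ i, ∑ j, b i * a i j * ⟪f j, f i⟫
      + Δt ^ 2 * ∑ i, ∑ j, b i * b j * ⟪f i, f j⟫ := by
  subst hunext
  have hF : ∀ v : V, ⟪v, ∑ j, b j • f j⟫ = ∑ j, b j * ⟪v, f j⟫ := by
    intro v; rw [inner_sum]; simp [real_inner_smul_right]
  have hFF : ⟪(∑ j, b j • f j : V), ∑ j, b j • f j⟫ = ∑ i, ∑ j, b i * b j * ⟪f i, f j⟫ := by
    rw [sum_inner]
    refine Finset.sum_congr rfl fun i _ => ?_
    rw [real_inner_smul_left, hF, mul_sum]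
    exact Finset.sum_congr rfl fun j _ => by ring
  have key : ‖un + Δt • ∑ j, b j • f j‖ ^ 2
      = ‖un‖ ^ 2 + 2 * (Δt * ∑ j, b j * ⟪un, f j⟫)
        + Δt ^ 2 * ∑ i, ∑ j, b i * b j * ⟪f i, f j⟫ := by
    rw [@norm_add_sq_real, norm_smul, real_inner_smul_right, hF, mul_pow,
      ← real_inner_self_eq_norm_sq (∑ j, b j • f j), hFF]
    simp [sq_abs]
  rw [key]
  have hy' : ∀ j, ⟪y j, f j⟫ = ⟪un, f j⟫ + Δt * ∑ k, a j k * ⟪f k, f j⟫ := by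
    intro j
    rw [hy j, inner_add_left, real_inner_smul_left, sum_inner]
    congr 1
    exact congrArg _ (Finset.sum_congr rfl fun k _ => by rw [real_inner_smul_left])
  simp only [hy']
  rw [Finset.sum_congr rfl (fun j _ => (mul_add (b j) _ _)), Finset.sum_add_distrib]
  have h2 : ∑ j, b j * (Δt * ∑ k, a j k * ⟪f k, f j⟫)
      = Δt * ∑ i, ∑ j, b i * a i j * ⟪f j, f i⟫ := by
    rw [mul_sum]
    refine Finset.sum_congr rfl fun i _ => ?_
    rw [mul_sum, mul_sum, mul_sum]
    exact Finset.sum_congr rfl fun j _ => by ring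
  rw [h2]
  ring
end

section
/- For the relaxation Runge–Kutta update u_γ^{n+1} = uⁿ + γΔt Σ_j b_j f_j, if Σ_j b_j ⟨y_j, f_j⟩ = 0 and ‖Σ_j b_j f_j‖² ≠ 0, then choosing γ = 2(Σ_{i,j} b_i a_{ij}⟨f_i, f_j⟩)/(Σ_{i,j} b_i b_j⟨f_i, f_j⟩) yields exact energy conservation: ‖u_γ^{n+1}‖² = ‖uⁿ‖². -/
open RealInnerProductSpace Finset

/-- The relaxation Runge–Kutta step with
`γ = 2(Σ bᵢaᵢⱼ⟪fᵢ,fⱼ⟫)/(Σ bᵢbⱼ⟪fᵢ,fⱼ⟫)` conserves the energy exactly when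
`Σ bⱼ⟪yⱼ,fⱼ⟫ = 0` and `‖Σ bⱼ fⱼ‖ ≠ 0`. -/
theorem stmt9 {V : Type*} [NormedAddCommGroup V] [InnerProductSpace ℝ V]
    {s : ℕ} (hs : 1 ≤ s)
    (un : V) (Δt : ℝ) (a : Fin s → Fin s → ℝ) (b : Fin s → ℝ) (f : Fin s → V)
    (y : Fin s → V) (hy : ∀ i, y i = un + Δt • ∑ j, a i j • f j)
    (hcons : ∑ j, b j * ⟪y j, f j⟫ = 0)
    (hne : ‖∑ j, b j • f j‖ ≠ 0)
    (γ : ℝ)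
    (hγ : γ = 2 * (∑ i, ∑ j, b i * a i j * ⟪f i, f j⟫)
              / (∑ i, ∑ j, b i * b j * ⟪f i, f j⟫))
    (uγ : V) (huγ : uγ = un + (γ * Δt) • ∑ j, b j • f j) :
    ‖uγ‖ ^ 2 = ‖un‖ ^ 2 := by
  set F : V := ∑ j, b j • f j with hF
  set A : ℝ := ∑ i, ∑ j, b i * a i j * ⟪f i, f j⟫ with hA
  set B : ℝ := ∑ i, ∑ j, b i * b j * ⟪f i, f j⟫ with hB
  have hBF : B = ‖F‖ ^ 2 := by
    rw [← real_inner_self_eq_norm_sq]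
    simp only [hF, hB, sum_inner, inner_sum, real_inner_smul_left,
      real_inner_smul_right, mul_assoc]
    exact Finset.sum_congr rfl fun i _ => Finset.sum_congr rfl fun j _ => by
      rw [real_inner_comm]
  have hBne : B ≠ 0 := by
    rw [hBF]; exact pow_ne_zero 2 hne
  have hunF : ⟪un, F⟫ = -(Δt * A) := by
    have h := hcons
    simp only [hy, inner_add_left, real_inner_smul_left, sum_inner] at h
    have hA' : A = ∑ j, ∑ k, b j * a j k * ⟪f k, f j⟫ := by
      refine Finset.sum_congr rfl fun j _ => Finset.sum_congr rfl fun k _ => ?_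
      rw [real_inner_comm]
    have hFun : ⟪un, F⟫ = ∑ j, b j * ⟪un, f j⟫ := by
      simp [hF, inner_sum, real_inner_smul_right]
    have hexp : ∑ j, b j * (⟪un, f j⟫ + Δt * ∑ k, a j k * ⟪f k, f j⟫)
        = (∑ j, b j * ⟪un, f j⟫) + Δt * ∑ j, ∑ k, b j * a j k * ⟪f k, f j⟫ := by
      rw [Finset.mul_sum, ← Finset.sum_add_distrib]
      refine Finset.sum_congr rfl fun j _ => ?_
      rw [Finset.mul_sum, Finset.mul_sum]
      ring_nf
      rw [Finset.mul_sum]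
      ring_nf
    rw [hexp] at h
    rw [hFun, hA']
    linarith
  have hnorm : ‖uγ‖ ^ 2 = ‖un‖ ^ 2 + 2 * ((γ * Δt) * ⟪un, F⟫) + (γ * Δt) ^ 2 * B := by
    rw [huγ, norm_add_sq_real, real_inner_smul_right, norm_smul, hBF]
    rw [Real.norm_eq_abs, mul_pow, sq_abs]
  rw [hnorm, hunF]
  have hγB : γ * B = 2 * A := by
    rw [hγ]; field_simp
  have : 2 * (γ * Δt * -(Δt * A)) + (γ * Δt) ^ 2 * B = 0 := by
    have : (γ * Δt) ^ 2 * B = γ * Δt ^ 2 * (γ * B) := by ring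
    rw [this, hγB]; ring
  linarith
end
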